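/- Let q ≥ 4 be a natural number and let U be a subset of the vertices of the Hamming graph H(2,q). If the VC-dimension of (U, n(U)) is 3, then there is a rectilinear line containing at least four vertices of U. -/

import Mathlib

/-- Two vertices of the Hamming graph `H(d,q,t)` (vertex set `(ZMod q)^d`) are adjacent
if and only if they differ in exactly `t` coordinates. -/
def hammingAdj {d q : ℕ} (t : ℕ) (x y : Fin d → ZMod q) : Prop :=
  (Finset.univ.filter fun i => x i ≠ y i).card = t

/-- `W ⊆ U` is shattered by the neighborhoods `n(U)`: for every `S ⊆ W` there is a
vertex `u ∈ U` with `n(u) ∩ W = S`. -/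
def Shatters {d q : ℕ} (t : ℕ) (U W : Finset (Fin d → ZMod q)) : Prop :=
  ∀ S ⊆ W, ∃ u ∈ U, ∀ w ∈ W, (w ∈ S ↔ hammingAdj t u w)

lemma adj_iff {q : ℕ} (x y : Fin 2 → ZMod q) :
    hammingAdj 1 x y ↔ ((x 0 = y 0 ∧ x 1 ≠ y 1) ∨ (x 0 ≠ y 0 ∧ x 1 = y 1)) := by
  have huniv : (Finset.univ : Finset (Fin 2)) = {0, 1} := rfl
  unfold hammingAdj
  rw [huniv]
  by_cases h0 : x 0 = y 0 <;> by_cases h1 : x 1 = y 1 <;>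
    simp [Finset.filter_insert, Finset.filter_singleton, h0, h1]

lemma ne_of_adj {q : ℕ} {x y : Fin 2 → ZMod q} (h : hammingAdj 1 x y) : x ≠ y := by
  rintro rfl
  simp [hammingAdj] at h

lemma funext2 {q : ℕ} {x y : Fin 2 → ZMod q} (h0 : x 0 = y 0) (h1 : x 1 = y 1) : x = y :=
  funext fun j => by fin_cases j <;> assumption

lemma agree {q : ℕ} {u a b : Fin 2 → ZMod q} (i : Fin 2) (hab : a ≠ b) (h : a i = b i)
    (hua : hammingAdj 1 u a) (hub : hammingAdj 1 u b) : u i = a i := by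
  rw [adj_iff] at hua hub
  have hi : i = 0 ∨ i = 1 := by fin_cases i <;> simp
  rcases hi with rfl | rfl <;>
  · rcases hua with ⟨h0, h1⟩ | ⟨h0, h1⟩ <;> rcases hub with ⟨h0', h1'⟩ | ⟨h0', h1'⟩ <;>
      first
        | assumption
        | (exact absurd (funext2 (by grind) (by grind)) hab)
        | grind

lemma ex_agree {q : ℕ} {u a : Fin 2 → ZMod q} (h : hammingAdj 1 u a) : ∃ i, u i = a i := by
  rw [adj_iff] at h
  rcases h with ⟨h0, _⟩ | ⟨_, h1⟩
  exacts [⟨0, h0⟩, ⟨1, h1⟩]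

lemma key {q : ℕ} (U W : Finset (Fin 2 → ZMod q)) (hWU : W ⊆ U) (hsh : Shatters 1 U W)
    (a b c : Fin 2 → ZMod q) (ha : a ∈ W) (hb : b ∈ W) (hc : c ∈ W)
    (hab : a ≠ b) (hac : a ≠ c) (hbc : b ≠ c)
    (u : Fin 2 → ZMod q) (huU : u ∈ U)
    (hua : hammingAdj 1 u a) (hub : hammingAdj 1 u b) (huc : hammingAdj 1 u c)
    (i : Fin 2) (hia : u i = a i) (hib : u i = b i) :
    ∃ (i' : Fin 2) (c' : ZMod q), 4 ≤ (U.filter fun v => v i' = c').card := by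
  obtain ⟨u', hu'U, hu'⟩ := hsh {a, b} (by
    intro x hx
    simp only [Finset.mem_insert, Finset.mem_singleton] at hx
    rcases hx with rfl | rfl <;> assumption)
  have hu'a : hammingAdj 1 u' a := (hu' a ha).mp (by simp)
  have hu'b : hammingAdj 1 u' b := (hu' b hb).mp (by simp)
  have hu'c : ¬ hammingAdj 1 u' c := by
    intro h
    have := (hu' c hc).mpr h
    simp only [Finset.mem_insert, Finset.mem_singleton] at this
    rcases this with rfl | rfl
    exacts [hac rfl, hbc rfl]
  have habi : a i = b i := hia ▸ hib
  have hu'i : u' i = a i := agree i hab habi hu'a hu'b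
  have huu' : u ≠ u' := fun h => hu'c (h ▸ huc)
  have hau : a ≠ u := fun h => ne_of_adj hua h.symm
  have hbu : b ≠ u := fun h => ne_of_adj hub h.symm
  have hau' : a ≠ u' := fun h => ne_of_adj hu'a h.symm
  have hbu' : b ≠ u' := fun h => ne_of_adj hu'b h.symm
  refine ⟨i, a i, ?_⟩
  have hsub : ({a, b, u, u'} : Finset (Fin 2 → ZMod q)) ⊆
      U.filter fun v => v i = a i := by
    intro x hx
    simp only [Finset.mem_insert, Finset.mem_singleton] at hx
    rcases hx with rfl | rfl | rfl | rfl <;> rw [Finset.mem_filter]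
    · exact ⟨hWU ha, rfl⟩
    · exact ⟨hWU hb, habi.symm⟩
    · exact ⟨huU, hia⟩
    · exact ⟨hu'U, hu'i⟩
  have hcard : ({a, b, u, u'} : Finset (Fin 2 → ZMod q)).card = 4 := by
    rw [Finset.card_insert_of_notMem (by simp [hab, hau, hau']),
      Finset.card_insert_of_notMem (by simp [hbu, hbu']),
      Finset.card_insert_of_notMem (by simp [huu']), Finset.card_singleton]
  calc 4 = ({a, b, u, u'} : Finset (Fin 2 → ZMod q)).card := hcard.symm
    _ ≤ _ := Finset.card_le_card hsub

/-- if `q ≥ 4` and the VC-dimension of `(U, n(U))` is 3 for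
`U ⊆ V(H(2,q))`, then some rectilinear line contains at least four vertices of `U`. -/
theorem line_with_four_points_of_vc_dim_three (q : ℕ) (hq : 4 ≤ q)
    (U : Finset (Fin 2 → ZMod q))
    (hvc₁ : ∃ W ⊆ U, W.card = 3 ∧ Shatters 1 U W)
    (hvc₂ : ∀ W ⊆ U, Shatters 1 U W → W.card ≤ 3) :
    ∃ (i : Fin 2) (c : ZMod q), 4 ≤ (U.filter fun v => v i = c).card := by
  obtain ⟨W, hWU, hW3, hsh⟩ := hvc₁
  obtain ⟨a, b, c, hab, hac, hbc, rfl⟩ := Finset.card_eq_three.mp hW3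
  have ha : a ∈ ({a, b, c} : Finset (Fin 2 → ZMod q)) := by simp
  have hb : b ∈ ({a, b, c} : Finset (Fin 2 → ZMod q)) := by simp
  have hc : c ∈ ({a, b, c} : Finset (Fin 2 → ZMod q)) := by simp
  obtain ⟨u, huU, hu⟩ := hsh {a, b, c} (Finset.Subset.refl _)
  have hua : hammingAdj 1 u a := (hu a ha).mp ha
  have hub : hammingAdj 1 u b := (hu b hb).mp hb
  have huc : hammingAdj 1 u c := (hu c hc).mp hc
  obtain ⟨ia, hiab⟩ := ex_agree hua
  obtain ⟨ib, hibb⟩ := ex_agree hub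
  obtain ⟨ic, hicc⟩ := ex_agree huc
  by_cases h1 : ia = ib
  · exact key U _ hWU hsh a b c ha hb hc hab hac hbc u huU hua hub huc ia hiab (h1 ▸ hibb)
  · by_cases h2 : ia = ic
    · exact key U _ hWU hsh a c b ha hc hb hac hab hbc.symm u huU hua huc hub
        ia hiab (h2 ▸ hicc)
    · have h3 : ib = ic := by fin_cases ia <;> fin_cases ib <;> fin_cases ic <;> simp_all
      exact key U _ hWU hsh b c a hb hc ha hbc hab.symm hac.symm u huU hub huc hua
        ib hibb (h3 ▸ hicc)
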